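/- For all positive integers t and m, the identity C_t(2m+1, t(m+1)) − C_t(2m+1, t(m+1)+1) = C_t(2m+2, t(m+1)) − C_t(2m+2, t(m+1)+1) holds, where C_s(n, k) denotes the s-binomial coefficient. -/

import Mathlib

open Polynomial Finset

/-- The s-binomial coefficient: coefficient of x^k in (1 + x + ... + x^s)^n. -/
noncomputable def sBinom (s n k : ℕ) : ℕ :=
  (((∑ i ∈ Finset.range (s + 1), (Polynomial.X : Polynomial ℕ) ^ i)) ^ n).coeff k

namespace SBinomAux

noncomputable def P (s : ℕ) : Polynomial ℕ := ∑ i ∈ Finset.range (s + 1), X ^ i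

lemma coeff_P (s j : ℕ) : (P s).coeff j = if j < s + 1 then 1 else 0 := by
  simp [P, Polynomial.finset_sum_coeff, Polynomial.coeff_X_pow, eq_comm]

lemma natDegree_P (s : ℕ) : (P s).natDegree = s := by
  apply le_antisymm
  · rw [natDegree_le_iff_coeff_eq_zero]
    intro m hm
    rw [coeff_P]
    simp [Nat.not_lt.mpr hm]
  · apply le_natDegree_of_ne_zero
    rw [coeff_P]
    simp

lemma monic_P (s : ℕ) : (P s).Monic := by
  have := monic_geom_sum_X (R := ℕ) (n := s + 1) (by omega)
  simpa [P] using this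

lemma reverse_P (s : ℕ) : (P s).reverse = P s := by
  ext j
  rw [coeff_reverse, natDegree_P]
  rcases le_or_gt j s with h | h
  · rw [revAt_le (by simpa using h), coeff_P, coeff_P]
    simp [Nat.lt_succ, h, Nat.sub_le]
  · rw [revAt_eq_self_of_lt h]

lemma reverse_pow (s n : ℕ) : ((P s) ^ n).reverse = (P s) ^ n := by
  induction n with
  | zero => simp [Polynomial.reverse, Polynomial.reflect_one]
  | succ n ih =>
    rw [pow_succ, reverse_mul, ih, reverse_P]
    have h1 : ((P s) ^ n).leadingCoeff = 1 := (monic_P s).pow n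
    have h2 : (P s).leadingCoeff = 1 := monic_P s
    rw [h1, h2]; norm_num

lemma telescope (f : ℕ → ℤ) (N : ℕ) :
    (∑ i ∈ Finset.range N, f (i + 1)) - ∑ i ∈ Finset.range N, f i = f N - f 0 := by
  induction N with
  | zero => simp
  | succ n ih =>
    rw [Finset.sum_range_succ, Finset.sum_range_succ]
    linarith

lemma symm (s n k : ℕ) (hk : k ≤ s * n) :
    sBinom s n k = sBinom s n (s * n - k) := by
  have hd : ((P s) ^ n).natDegree = s * n := by
    rw [(monic_P s).natDegree_pow, natDegree_P, Nat.mul_comm]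
  have := congrArg (fun p => Polynomial.coeff p k) (reverse_pow s n)
  rw [coeff_reverse, hd, revAt_le hk] at this
  exact this.symm

lemma recur (s n k : ℕ) (hk : s ≤ k) :
    sBinom s (n + 1) k = ∑ i ∈ Finset.range (s + 1), sBinom s n (k - i) := by
  show ((P s) ^ (n+1)).coeff k = _
  rw [pow_succ, P, Finset.mul_sum, Polynomial.finset_sum_coeff]
  refine Finset.sum_congr rfl fun i hi => ?_
  rw [Polynomial.coeff_mul_X_pow']
  rw [if_pos (le_trans (by simpa using Nat.lt_succ_iff.mp (Finset.mem_range.mp hi)) hk)]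
  rfl

end SBinomAux

theorem stmt4 (t m : ℕ) (ht : 0 < t) (hm : 0 < m) :
    (sBinom t (2 * m + 1) (t * (m + 1)) : ℤ) - sBinom t (2 * m + 1) (t * (m + 1) + 1) =
      (sBinom t (2 * m + 2) (t * (m + 1)) : ℤ) - sBinom t (2 * m + 2) (t * (m + 1) + 1) := by
  set n := 2 * m + 1
  set k := t * (m + 1)
  have htk : t ≤ k := Nat.le_mul_of_pos_right t (by omega)
  have h1 : sBinom t (n + 1) k = ∑ i ∈ Finset.range (t + 1), sBinom t n (k - i) :=
    SBinomAux.recur t n k htk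
  have h2 : sBinom t (n + 1) (k + 1) = ∑ i ∈ Finset.range (t + 1), sBinom t n (k + 1 - i) :=
    SBinomAux.recur t n (k + 1) (by omega)
  have hn1 : n + 1 = 2 * m + 2 := rfl
  rw [← hn1, h1, h2]
  push_cast
  -- telescoping: define c i = sBinom t n (k + 1 - i)
  have hre : ∀ i ∈ Finset.range (t + 1), (sBinom t n (k - i) : ℤ) = (sBinom t n (k + 1 - (i + 1)) : ℤ) := by
    intro i _; rw [Nat.succ_sub_succ]
  rw [Finset.sum_congr rfl hre]
  rw [show (∑ i ∈ Finset.range (t + 1), (sBinom t n (k + 1 - (i + 1)) : ℤ)) -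
        ∑ i ∈ Finset.range (t + 1), (sBinom t n (k + 1 - i) : ℤ) =
      (sBinom t n (k + 1 - (t + 1)) : ℤ) - sBinom t n (k + 1 - 0) from ?_]
  · have hsym : sBinom t n (k + 1 - (t + 1)) = sBinom t n k := by
      have h1 : k + 1 - (t + 1) = t * m := by
        simp only [k]; ring_nf; omega
      have h2 : t * n - t * m = k := by
        simp only [n, k]; ring_nf; omega
      rw [h1, SBinomAux.symm t n (t * m) (by simp only [n]; nlinarith), h2]
    rw [hsym]
    norm_num
  · exact SBinomAux.telescope (fun i => (sBinom t n (k + 1 - i) : ℤ)) (t + 1)
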